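/- Let S be a vertex ordering of a graph, v a vertex, and S' obtained from S by moving v to a later position (p_S(v) < p_{S'}(v)) while keeping the relative order of all other vertices. If every vertex u in the closed neighborhood N[v] of v whose position in S' lies in the interval [p_S(v), p_{S'}(v)] receives the same first-fit color in S and in S', then every vertex of the graph receives the same first-fit color in S and in S'. -/

import Mathlib

open SimpleGraph

/-- First-fit coloring along a vertex sequence: each vertex in turn receives the
smallest positive integer not used on its already-colored neighbors. Uncolored
vertices have color `0`. -/
noncomputable def firstFit {V : Type*} [DecidableEq V] (G : SimpleGraph V) (l : List V) :
    V → ℕ :=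
  l.foldl (fun c v => Function.update c v
    (sInf {k | 0 < k ∧ ∀ u, G.Adj v u → c u ≠ k})) (fun _ => 0)

/-- `l` is an ordering of all vertices. -/
def IsOrdering {V : Type*} (l : List V) : Prop := l.Nodup ∧ ∀ v : V, v ∈ l

/-- `l` is a connected ordering: every vertex after the first has a neighbor earlier. -/
def IsConnectedOrdering {V : Type*} (G : SimpleGraph V) (l : List V) : Prop :=
  IsOrdering l ∧ ∀ i (hi : i < l.length), 0 < i → ∃ u ∈ l.take i, G.Adj u (l.get ⟨i, hi⟩)

/-- Number of colors used by first-fit along `l`. -/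
noncomputable def numColors {V : Type*} [Fintype V] [DecidableEq V] (G : SimpleGraph V)
    (l : List V) : ℕ :=
  Finset.univ.sup (firstFit G l)

/-- The Grundy number: maximum number of first-fit colors over all vertex orderings. -/
noncomputable def grundy {V : Type*} [Fintype V] [DecidableEq V] (G : SimpleGraph V) : ℕ :=
  sSup {k | ∃ l : List V, IsOrdering l ∧ k = numColors G l}

/-- The connected Grundy number: maximum number of first-fit colors over connected orderings. -/
noncomputable def connGrundy {V : Type*} [Fintype V] [DecidableEq V] (G : SimpleGraph V) : ℕ :=
  sSup {k | ∃ l : List V, IsConnectedOrdering G l ∧ k = numColors G l}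

section Helpers

variable {V : Type*} [DecidableEq V]

/-- The single step of first-fit coloring. -/
noncomputable def ffStep (G : SimpleGraph V) (c : V → ℕ) (v : V) : V → ℕ :=
  Function.update c v (sInf {k | 0 < k ∧ ∀ u, G.Adj v u → c u ≠ k})

lemma firstFit_eq_foldl (G : SimpleGraph V) (l : List V) :
    firstFit G l = l.foldl (ffStep G) (fun _ => 0) := rfl

lemma foldl_ffStep_of_not_mem (G : SimpleGraph V) (c : V → ℕ) (l : List V) (u : V)
    (h : u ∉ l) : l.foldl (ffStep G) c u = c u := by
  induction l generalizing c with
  | nil => rfl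
  | cons a t ih =>
    have hua : u ≠ a := fun e => h (e ▸ List.mem_cons_self)
    simp only [List.foldl_cons]
    rw [ih _ (fun hm => h (List.mem_cons_of_mem a hm))]
    simp [ffStep, Function.update_of_ne hua]

lemma firstFit_of_not_mem (G : SimpleGraph V) (l : List V) (u : V) (h : u ∉ l) :
    firstFit G l u = 0 := by
  rw [firstFit_eq_foldl]; exact foldl_ffStep_of_not_mem G _ l u h

lemma firstFit_append_of_not_mem (G : SimpleGraph V) (l₁ l₂ : List V) (u : V) (h : u ∉ l₂) :
    firstFit G (l₁ ++ l₂) u = firstFit G l₁ u := by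
  rw [firstFit_eq_foldl, List.foldl_append, ← firstFit_eq_foldl]
  exact foldl_ffStep_of_not_mem G _ l₂ u h

lemma firstFit_middle (G : SimpleGraph V) (l₁ l₂ : List V) (u : V) (h : u ∉ l₂) :
    firstFit G (l₁ ++ u :: l₂) u
      = sInf {k | 0 < k ∧ ∀ w, G.Adj u w → firstFit G l₁ w ≠ k} := by
  rw [firstFit_eq_foldl, List.foldl_append, List.foldl_cons,
    foldl_ffStep_of_not_mem G _ l₂ u h, ← firstFit_eq_foldl]
  simp [ffStep]

lemma mem_take_indexOf {l : List V} (hnd : l.Nodup) {w : V} {n : ℕ} (hn : n ≤ l.length) :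
    w ∈ l.take n ↔ l.idxOf w < n := by
  constructor
  · intro hw
    obtain ⟨j, hj, hgj⟩ := List.getElem_of_mem hw
    rw [List.length_take] at hj
    rw [List.getElem_take] at hgj
    have hjl : j < l.length := lt_of_lt_of_le (lt_min_iff.mp hj).2 le_rfl
    have hwl : w ∈ l := hgj ▸ List.getElem_mem hjl
    have : l[l.idxOf w]'(List.idxOf_lt_length_iff.2 hwl) = l[j] := by
      rw [List.getElem_idxOf, hgj]
    exact (hnd.getElem_inj_iff.mp this) ▸ (lt_min_iff.mp hj).1
  · intro hw
    have hwl : w ∈ l := List.idxOf_lt_length_iff.1 (lt_of_lt_of_le hw hn)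
    have hlt : l.idxOf w < l.length := List.idxOf_lt_length_iff.2 hwl
    have : (l.take n)[l.idxOf w]'(by rw [List.length_take]; omega) = w := by
      rw [List.getElem_take]; exact List.getElem_idxOf hlt
    exact this ▸ List.getElem_mem _

lemma firstFit_char (G : SimpleGraph V) {l : List V} (hnd : l.Nodup) {u : V} (hu : u ∈ l) :
    firstFit G l u = sInf {k | 0 < k ∧
      ∀ w, G.Adj u w → l.idxOf w < l.idxOf u → firstFit G l w ≠ k} := by
  have hi : l.idxOf u < l.length := List.idxOf_lt_length_iff.2 hu
  have hdec : l = l.take (l.idxOf u) ++ u :: l.drop (l.idxOf u + 1) := by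
    conv_lhs => rw [← List.take_append_drop (l.idxOf u) l]
    rw [List.drop_eq_getElem_cons hi, List.getElem_idxOf hi]
  have hnd' := hdec ▸ hnd
  rw [List.nodup_append] at hnd'
  obtain ⟨h1, h2, hdisj⟩ := hnd'
  have hul2 : u ∉ l.drop (l.idxOf u + 1) := (List.nodup_cons.mp h2).1
  conv_lhs => rw [hdec]
  rw [firstFit_middle G _ _ u hul2]
  congr 1
  ext k
  simp only [Set.mem_setOf_eq, and_congr_right_iff]
  intro hk
  constructor
  · intro h w hw hlt
    have hwt : w ∈ l.take (l.idxOf u) := (mem_take_indexOf hnd hi.le).2 hlt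
    have : firstFit G l w = firstFit G (l.take (l.idxOf u)) w := by
      conv_lhs => rw [hdec]
      exact firstFit_append_of_not_mem G _ _ w (fun hm => hdisj w hwt w hm rfl)
    rw [this]; exact h w hw
  · intro h w hw
    by_cases hwt : w ∈ l.take (l.idxOf u)
    · have hlt := (mem_take_indexOf hnd hi.le).1 hwt
      have : firstFit G l w = firstFit G (l.take (l.idxOf u)) w := by
        conv_lhs => rw [hdec]
        exact firstFit_append_of_not_mem G _ _ w (fun hm => hdisj w hwt w hm rfl)
      rw [← this]; exact h w hw hlt
    · rw [firstFit_of_not_mem G _ w hwt]; omega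

lemma indexOf_insertIdx_self (v : V) : ∀ (n : ℕ) (E : List V), v ∉ E → n ≤ E.length →
    (E.insertIdx n v).idxOf v = n
  | 0, E, _, _ => by simp
  | n + 1, [], _, h => absurd h (by simp)
  | n + 1, a :: t, hv, h => by
    have hav : v ≠ a := fun e => hv (e ▸ List.mem_cons_self)
    rw [List.insertIdx_succ_cons, List.idxOf_cons_ne _ hav.symm,
      indexOf_insertIdx_self v n t (fun hm => hv (List.mem_cons_of_mem a hm))
        (Nat.le_of_succ_le_succ h)]

lemma indexOf_insertIdx_ne (v u : V) (huv : u ≠ v) :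
    ∀ (n : ℕ) (E : List V), u ∈ E → n ≤ E.length →
    (E.insertIdx n v).idxOf u
      = if E.idxOf u < n then E.idxOf u else E.idxOf u + 1
  | 0, E, _, _ => by simp [List.idxOf_cons_ne E (Ne.symm huv)]
  | n + 1, [], hu, _ => absurd hu (by simp)
  | n + 1, a :: t, hu, h => by
    rw [List.insertIdx_succ_cons]
    by_cases hua : u = a
    · subst hua
      rw [List.idxOf_cons_self, List.idxOf_cons_self]
      simp
    · have hut : u ∈ t := List.mem_of_ne_of_mem hua hu
      rw [List.idxOf_cons_ne _ (fun e => hua e.symm),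
        List.idxOf_cons_ne _ (fun e => hua e.symm),
        indexOf_insertIdx_ne v u huv n t hut (Nat.le_of_succ_le_succ h)]
      split_ifs <;> omega

lemma insertIdx_indexOf_erase {S : List V} {v : V} (hv : v ∈ S) (hnd : S.Nodup) :
    (S.erase v).insertIdx (S.idxOf v) v = S ∧ S.idxOf v ≤ (S.erase v).length := by
  induction S with
  | nil => cases hv
  | cons a t ih =>
    by_cases hav : a = v
    · subst hav
      rw [List.erase_cons_head, List.idxOf_cons_self]
      exact ⟨rfl, Nat.zero_le _⟩
    · have hvt : v ∈ t := List.mem_of_ne_of_mem (fun e => hav e.symm) hv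
      obtain ⟨ih1, ih2⟩ := ih hvt (List.nodup_cons.mp hnd).2
      rw [List.erase_cons_tail (by simpa using hav), List.idxOf_cons_ne _ hav]
      constructor
      · rw [Nat.succ_eq_add_one, List.insertIdx_succ_cons, ih1]
      · simpa using ih2

end Helpers

theorem stmt8 {V : Type*} [DecidableEq V] (G : SimpleGraph V) (S : List V)
    (hS : IsOrdering S) (v : V) (p' : ℕ) (hp' : p' ≤ (S.erase v).length)
    (S' : List V) (hS' : S' = (S.erase v).insertIdx p' v)
    (hmove : S.idxOf v < S'.idxOf v)
    (hcol : ∀ u, (u = v ∨ G.Adj u v) → S.idxOf v ≤ S'.idxOf u →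
      S'.idxOf u ≤ S'.idxOf v → firstFit G S u = firstFit G S' u) :
    firstFit G S = firstFit G S' := by
  obtain ⟨hnd, hmem⟩ := hS
  have hvS : v ∈ S := hmem v
  have hvE : v ∉ S.erase v := hnd.not_mem_erase
  have hEnd : (S.erase v).Nodup := hnd.erase v
  obtain ⟨hSdec, hpE⟩ := insertIdx_indexOf_erase hvS hnd
  have hq : S'.idxOf v = p' := by
    rw [hS']; exact indexOf_insertIdx_self v p' _ hvE hp'
  have hS'nd : S'.Nodup := by
    rw [hS']
    exact ((List.perm_insertIdx v _ hp').nodup_iff).mpr (List.nodup_cons.mpr ⟨hvE, hEnd⟩)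
  have hmemS' : ∀ u, u ∈ S' := by
    intro u
    rw [hS', List.mem_insertIdx hp']
    by_cases huv : u = v
    · exact Or.inl huv
    · exact Or.inr ((List.mem_erase_of_ne huv).2 (hmem u))
  have hpq : S.idxOf v < p' := hq ▸ hmove
  have idxS : ∀ u, u ≠ v → S.idxOf u =
      (if (S.erase v).idxOf u < S.idxOf v then (S.erase v).idxOf u
       else (S.erase v).idxOf u + 1) := by
    intro u huv
    conv_lhs => rw [← hSdec]
    exact indexOf_insertIdx_ne v u huv _ _ ((List.mem_erase_of_ne huv).2 (hmem u)) hpE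
  have idxS' : ∀ u, u ≠ v → S'.idxOf u =
      (if (S.erase v).idxOf u < p' then (S.erase v).idxOf u
       else (S.erase v).idxOf u + 1) := by
    intro u huv
    rw [hS']
    exact indexOf_insertIdx_ne v u huv _ _ ((List.mem_erase_of_ne huv).2 (hmem u)) hp'
  have key : ∀ n u, S'.idxOf u < n → firstFit G S u = firstFit G S' u := by
    intro n
    induction n with
    | zero => intro u h; exact absurd h (Nat.not_lt_zero _)
    | succ n IH =>
      intro u hu
      by_cases huv : u = v
      · subst huv; exact hcol u (Or.inl rfl) hmove.le le_rfl
      · by_cases hreg : G.Adj u v ∧ S.idxOf v ≤ (S.erase v).idxOf u ∧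
            (S.erase v).idxOf u < p'
        · obtain ⟨hadj, h1, h2⟩ := hreg
          have h3 : S'.idxOf u = (S.erase v).idxOf u := by
            rw [idxS' u huv, if_pos h2]
          exact hcol u (Or.inr hadj) (by omega) (by omega)
        · rw [firstFit_char G hnd (hmem u), firstFit_char G hS'nd (hmemS' u)]
          have iffidx : ∀ w, G.Adj u w →
              (S.idxOf w < S.idxOf u ↔ S'.idxOf w < S'.idxOf u) := by
            intro w hw
            by_cases hwv : w = v
            · have hadj : G.Adj u v := hwv ▸ hw
              have hcase : (S.erase v).idxOf u < S.idxOf v ∨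
                  p' ≤ (S.erase v).idxOf u := by
                by_contra hc
                push_neg at hc
                exact hreg ⟨hadj, hc.1, hc.2⟩
              rw [hwv, idxS u huv, idxS' u huv, hq]
              split_ifs <;> omega
            · rw [idxS u huv, idxS' u huv, idxS w hwv, idxS' w hwv]
              split_ifs <;> omega
          have iffcol : ∀ w, G.Adj u w → S'.idxOf w < S'.idxOf u →
              firstFit G S w = firstFit G S' w := by
            intro w hw hlt
            exact IH w (by omega)
          congr 1
          ext k
          simp only [Set.mem_setOf_eq, and_congr_right_iff]
          intro hk
          constructor
          · intro h w hw hlt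
            rw [← iffcol w hw hlt]
            exact h w hw ((iffidx w hw).2 hlt)
          · intro h w hw hlt
            have hlt' := (iffidx w hw).1 hlt
            rw [iffcol w hw hlt']
            exact h w hw hlt'
  funext u
  exact key (S'.idxOf u + 1) u (Nat.lt_succ_self _)
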